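/- Let H_1 and H_2 be disjoint finite simple graphs with vertices v_1 ∈ V(H_1) and v_2 ∈ V(H_2). For integers i ≥ 0 and j ≥ 0, let G_{i,j} be the graph obtained from the disjoint union of H_1 and H_2 by joining v_1 to v_2 through a new path v_1 ∼ w_1 ∼ w_2 ∼ ⋯ ∼ w_{i+j+1} ∼ v_2 with i+j+1 new internal vertices, and attaching one new pendant vertex to the middle vertex w_{i+1}. Then for all λ > 2 and all i ≥ 0, j ≥ 1: φ_{G_{i,j}}(λ) − φ_{G_{i+1,j−1}}(λ) = (x_1 − x_2)·(p_{(H_1,v_1)}(λ)·q_{(H_2,v_2)}(λ)·x_2^{j−i−1} − q_{(H_1,v_1)}(λ)·p_{(H_2,v_2)}(λ)·x_1^{j−i−1}). -/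

import Mathlib

open Finset
open scoped Classical

/-- Adjacency matrix of a simple graph over `ℝ`. -/
noncomputable def adjM {V : Type*} [Fintype V] (G : SimpleGraph V) : Matrix V V ℝ :=
  fun a b => if G.Adj a b then 1 else 0

/-- Spectral radius: the largest eigenvalue of the adjacency matrix. -/
noncomputable def specRad {V : Type*} [Fintype V] (G : SimpleGraph V) : ℝ :=
  sSup {t : ℝ | ∃ f : V → ℝ, f ≠ 0 ∧ (adjM G).mulVec f = t • f}

/-- Characteristic polynomial of the adjacency matrix, as a function `φ_G(λ) = det(λI − A)`. -/
noncomputable def phi {V : Type*} [Fintype V] [DecidableEq V] (G : SimpleGraph V) (l : ℝ) : ℝ :=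
  (l • (1 : Matrix V V ℝ) - adjM G).det

/-- `G` is connected with diameter exactly `D`. -/
def hasDiam {V : Type*} (G : SimpleGraph V) (D : ℕ) : Prop :=
  G.Connected ∧ (∀ u v : V, G.dist u v ≤ D) ∧ ∃ u v : V, G.dist u v = D

/-- `G` is a minimizer graph among connected graphs on `n` vertices with diameter `D`. -/
def IsMinimizer (n D : ℕ) (G : SimpleGraph (Fin n)) : Prop :=
  hasDiam G D ∧ ∀ H : SimpleGraph (Fin n), hasDiam H D → specRad G ≤ specRad H

noncomputable def x1 (l : ℝ) : ℝ := (l - Real.sqrt (l ^ 2 - 4)) / 2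
noncomputable def x2 (l : ℝ) : ℝ := (l + Real.sqrt (l ^ 2 - 4)) / 2
noncomputable def d1f (l : ℝ) : ℝ := l - x1 l ^ 3
noncomputable def d2f (l : ℝ) : ℝ := x2 l ^ 3 - l

/-- Deletion of a vertex from a graph. -/
def delVert {V : Type*} (G : SimpleGraph V) (v : V) : SimpleGraph {u : V // u ≠ v} :=
  SimpleGraph.comap Subtype.val G

noncomputable def pfun {V : Type*} [Fintype V] [DecidableEq V] (G : SimpleGraph V) (v : V)
    (l : ℝ) : ℝ :=
  (phi (delVert G v) l - x1 l * phi G l) / (x2 l - x1 l)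

noncomputable def qfun {V : Type*} [Fintype V] [DecidableEq V] (G : SimpleGraph V) (v : V)
    (l : ℝ) : ℝ :=
  (x2 l * phi G l - phi (delVert G v) l) / (x2 l - x1 l)

/-- The graph `G_{i,j}`: join `v1 ∈ H1` to `v2 ∈ H2` by a path
`v1 ∼ w_0 ∼ w_1 ∼ ⋯ ∼ w_{i+j} ∼ v2` with `i+j+1` new internal vertices, and attach
one new pendant vertex (the `Unit` summand) to `w_i`, so that the pendant vertex's
neighbour on the path has `i` path vertices on the `H1`-side and `j` on the `H2`-side. -/
def pathJoin {V1 V2 : Type*} (H1 : SimpleGraph V1) (v1 : V1) (H2 : SimpleGraph V2) (v2 : V2)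
    (i j : ℕ) : SimpleGraph (V1 ⊕ V2 ⊕ Fin (i + j + 1) ⊕ Unit) :=
  SimpleGraph.fromRel (fun a b =>
    match a, b with
    | Sum.inl a, Sum.inl b => H1.Adj a b
    | Sum.inr (Sum.inl a), Sum.inr (Sum.inl b) => H2.Adj a b
    | Sum.inl a, Sum.inr (Sum.inr (Sum.inl w)) => a = v1 ∧ (w : ℕ) = 0
    | Sum.inr (Sum.inl a), Sum.inr (Sum.inr (Sum.inl w)) => a = v2 ∧ (w : ℕ) = i + j
    | Sum.inr (Sum.inr (Sum.inl w)), Sum.inr (Sum.inr (Sum.inl w')) => (w : ℕ) + 1 = (w' : ℕ)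
    | Sum.inr (Sum.inr (Sum.inl w)), Sum.inr (Sum.inr (Sum.inr _)) => (w : ℕ) = i
    | _, _ => False)



section DetLemmas
open Matrix

variable {V : Type*} [Fintype V] [DecidableEq V]

lemma det_row_single (M : Matrix V V ℝ) (u : V)
    (h : ∀ x, M u x = if x = u then 1 else 0) :
    M.det = (M.submatrix (Subtype.val : {x : V // x ≠ u} → V) Subtype.val).det := by
  have hsub : Subsingleton {x : V // ¬ x ≠ u} := ⟨by
    rintro ⟨a, ha⟩ ⟨b, hb⟩
    simp only [not_not] at ha hb
    subst ha; subst hb; rfl⟩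
  rw [← Matrix.det_submatrix_equiv_self (Equiv.sumCompl (fun x : V => x ≠ u)) M]
  have heq : M.submatrix (Equiv.sumCompl (fun x : V => x ≠ u))
      (Equiv.sumCompl (fun x : V => x ≠ u))
      = Matrix.fromBlocks (M.submatrix Subtype.val Subtype.val)
        (Matrix.of fun (a : {x : V // x ≠ u}) (b : {x : V // ¬ x ≠ u}) => M a.1 b.1)
        0 (Matrix.of fun (a b : {x : V // ¬ x ≠ u}) => M a.1 b.1) := by
    ext a b
    rcases a with a | a <;> rcases b with b | b <;>
      simp only [Matrix.submatrix_apply, Equiv.sumCompl_apply_inl, Equiv.sumCompl_apply_inr,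
        Matrix.fromBlocks_apply₁₁, Matrix.fromBlocks_apply₁₂, Matrix.fromBlocks_apply₂₁,
        Matrix.fromBlocks_apply₂₂, Matrix.of_apply, Matrix.zero_apply]
    · have ha : a.1 = u := not_not.mp a.2
      rw [ha, h b.1, if_neg b.2]
  rw [heq, Matrix.det_fromBlocks_zero₂₁]
  have hD : (Matrix.of fun (a b : {x : V // ¬ x ≠ u}) => M a.1 b.1).det = 1 := by
    rw [Matrix.det_eq_elem_of_subsingleton _ ⟨u, by simp⟩]
    simpa using h u
  rw [hD, mul_one]

lemma det_col_single (M : Matrix V V ℝ) (u : V)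
    (h : ∀ x, M x u = if x = u then 1 else 0) :
    M.det = (M.submatrix (Subtype.val : {x : V // x ≠ u} → V) Subtype.val).det := by
  rw [← Matrix.det_transpose M, det_row_single Mᵀ u h, ← Matrix.transpose_submatrix,
    Matrix.det_transpose]

lemma det_pendant (M : Matrix V V ℝ) (l : ℝ) (u c : V) (huc : u ≠ c)
    (huu : M u u = l) (hucm : M u c = -1) (hcum : M c u = -1)
    (hrow : ∀ x, x ≠ u → x ≠ c → M u x = 0)
    (hcol : ∀ x, x ≠ u → x ≠ c → M x u = 0) :
    M.det = l * (M.submatrix (Subtype.val : {x : V // x ≠ u} → V) Subtype.val).det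
      - (M.submatrix (Subtype.val : {x : V // x ≠ u ∧ x ≠ c} → V) Subtype.val).det := by
  have hrowdecomp : (l • (Pi.single u 1 : V → ℝ) + (-1 : ℝ) • (Pi.single c 1 : V → ℝ)) = M u := by
    funext x
    by_cases hx : x = u
    · subst hx
      simp [Pi.single_apply, huc.symm, huu]
    · by_cases hx2 : x = c
      · subst hx2
        simp [Pi.single_apply, huc.symm, Ne.symm hx, hucm]
      · simp [Pi.single_apply, hx, hx2, hrow x hx hx2]
  have hM : M.updateRow u (l • (Pi.single u 1 : V → ℝ) + (-1 : ℝ) • (Pi.single c 1 : V → ℝ)) = M := by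
    rw [hrowdecomp, Matrix.updateRow_eq_self]
  -- Term 1
  have hT1 : (M.updateRow u ((Pi.single u 1 : V → ℝ))).det
      = (M.submatrix (Subtype.val : {x : V // x ≠ u} → V) Subtype.val).det := by
    rw [det_row_single (M.updateRow u ((Pi.single u 1 : V → ℝ))) u
      (by intro x; rw [Matrix.updateRow_self, Pi.single_apply])]
    congr 1
    ext a b
    simp [Matrix.updateRow_ne a.2]
  -- Term 2
  set N := M.updateRow u ((Pi.single c 1 : V → ℝ)) with hN
  have hswap : (N.submatrix id (Equiv.swap u c)).det = - N.det := by
    rw [Matrix.det_permute' (Equiv.swap u c) N, Equiv.Perm.sign_swap huc]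
    simp
  set P := N.submatrix id (Equiv.swap u c) with hP
  have hPu : ∀ x, P u x = if x = u then 1 else 0 := by
    intro x
    have : P u x = (Pi.single c 1 : V → ℝ) (Equiv.swap u c x) := by
      simp [hP, hN, Matrix.submatrix_apply, Matrix.updateRow_self]
    rw [this, Pi.single_apply]
    by_cases hx : x = u
    · subst hx; simp [Equiv.swap_apply_left]
    · by_cases hx2 : x = c
      · subst hx2; simp [Equiv.swap_apply_right, huc, hx]
      · simp [Equiv.swap_apply_of_ne_of_ne hx hx2, hx, hx2]
  have hPdet : P.det = (P.submatrix (Subtype.val : {x : V // x ≠ u} → V) Subtype.val).det :=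
    det_row_single P u hPu
  set Q := P.submatrix (Subtype.val : {x : V // x ≠ u} → V) Subtype.val with hQ
  set cu : {x : V // x ≠ u} := ⟨c, Ne.symm huc⟩ with hcu
  have hQentry : ∀ (x y : {x : V // x ≠ u}), Q x y = M x.1 (Equiv.swap u c y.1) := by
    intro x y
    simp [hQ, hP, hN, Matrix.submatrix_apply, Matrix.updateRow_ne x.2]
  have hQcol : (fun x => Q x cu) = (-1 : ℝ) • (Pi.single cu 1 : {x : V // x ≠ u} → ℝ) := by
    funext x
    rw [hQentry x cu]
    have : Equiv.swap u c (cu).1 = u := Equiv.swap_apply_right u c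
    rw [this]
    by_cases hx : x = cu
    · subst hx; simp [Pi.single_apply, hcum]; exact hcum
    · have hx1 : x.1 ≠ c := fun h => hx (Subtype.ext h)
      rw [hcol x.1 x.2 hx1]
      simp [Pi.single_apply, hx]
  have hQsplit : Q.det = - (Q.updateCol cu ((Pi.single cu 1 : {x : V // x ≠ u} → ℝ))).det := by
    conv_lhs => rw [← Matrix.updateCol_eq_self Q cu]
    rw [show (fun x => Q x cu) = (-1 : ℝ) • (Pi.single cu 1 : {x : V // x ≠ u} → ℝ) from hQcol]
    rw [Matrix.det_updateCol_smul]
    ring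
  set R := Q.updateCol cu ((Pi.single cu 1 : {x : V // x ≠ u} → ℝ)) with hR
  have hRdet : R.det = (R.submatrix (Subtype.val : {x : {x : V // x ≠ u} // x ≠ cu} → _)
      Subtype.val).det := by
    apply det_col_single
    intro x
    rw [hR, Matrix.updateCol_self, Pi.single_apply]
  have hRsub : (R.submatrix (Subtype.val : {x : {x : V // x ≠ u} // x ≠ cu} → _)
      Subtype.val).det
      = (M.submatrix (Subtype.val : {x : V // x ≠ u ∧ x ≠ c} → V) Subtype.val).det := by
    let e : {x : {x : V // x ≠ u} // x ≠ cu} ≃ {x : V // x ≠ u ∧ x ≠ c} :=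
      { toFun := fun y => ⟨y.1.1, y.1.2, fun h => y.2 (Subtype.ext h)⟩
        invFun := fun x => ⟨⟨x.1, x.2.1⟩, fun h => x.2.2 (congrArg Subtype.val h)⟩
        left_inv := fun y => rfl
        right_inv := fun x => rfl }
    rw [← Matrix.det_submatrix_equiv_self e]
    congr 1
    ext a b
    simp only [Matrix.submatrix_apply, hR]
    rw [Matrix.updateCol_ne b.2, hQentry]
    have hs : Equiv.swap u c (b.1).1 = (b.1).1 :=
      Equiv.swap_apply_of_ne_of_ne b.1.2 (fun h => b.2 (Subtype.ext h))
    rw [hs]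
    rfl
  have hNdet : N.det = (M.submatrix (Subtype.val : {x : V // x ≠ u ∧ x ≠ c} → V)
      Subtype.val).det := by
    have h1 : N.det = - P.det := by rw [hswap]; ring
    rw [h1, hPdet, hQsplit, hRdet, hRsub]
    ring
  calc M.det = (M.updateRow u (l • (Pi.single u 1 : V → ℝ) + (-1 : ℝ) • (Pi.single c 1 : V → ℝ))).det := by
        rw [hM]
    _ = l * (M.updateRow u ((Pi.single u 1 : V → ℝ))).det + (-1) * N.det := by
        rw [Matrix.det_updateRow_add, Matrix.det_updateRow_smul, Matrix.det_updateRow_smul]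
    _ = _ := by rw [hT1, hNdet]; ring

lemma det_submatrix_range {W : Type*} [Fintype W] [DecidableEq W] (M : Matrix V V ℝ) (p : V → Prop) [DecidablePred p]
    (f : W → V) (hinj : Function.Injective f) (hr : ∀ x, p x ↔ ∃ w, f w = x) :
    (M.submatrix (Subtype.val : {x : V // p x} → V) Subtype.val).det
      = (M.submatrix f f).det := by
  have hbij : Function.Bijective (fun w : W => (⟨f w, (hr _).mpr ⟨w, rfl⟩⟩ : {x : V // p x})) := by
    constructor
    · intro a b h
      exact hinj (congrArg Subtype.val h)
    · rintro ⟨x, hx⟩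
      obtain ⟨w, rfl⟩ := (hr x).mp hx
      exact ⟨w, rfl⟩
  rw [← Matrix.det_submatrix_equiv_self (Equiv.ofBijective _ hbij), Matrix.submatrix_submatrix]
  rfl

end DetLemmas

section GraphLemmas

lemma adjM_apply {V : Type*} [Fintype V] (G : SimpleGraph V) (a b : V) :
    adjM G a b = if G.Adj a b then 1 else 0 := rfl

lemma charM_apply {V : Type*} [Fintype V] [DecidableEq V] (G : SimpleGraph V) (l : ℝ)
    (a b : V) :
    (l • (1 : Matrix V V ℝ) - adjM G) a b
      = (if a = b then l else 0) - (if G.Adj a b then 1 else 0) := by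
  simp [Matrix.sub_apply, Matrix.smul_apply, Matrix.one_apply, adjM, mul_ite, mul_one, mul_zero,
    smul_eq_mul]

lemma charM_submatrix {A B : Type*} [Fintype A] [DecidableEq A] [Fintype B] [DecidableEq B]
    (G : SimpleGraph A) (G' : SimpleGraph B) (f : B → A) (hinj : Function.Injective f)
    (hadj : ∀ x y, G'.Adj x y ↔ G.Adj (f x) (f y)) (l : ℝ) :
    (l • (1 : Matrix A A ℝ) - adjM G).submatrix f f = l • (1 : Matrix B B ℝ) - adjM G' := by
  ext x y
  simp only [Matrix.submatrix_apply, charM_apply, hinj.eq_iff, ← hadj]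

lemma phi_eq_of_bij {A B : Type*} [Fintype A] [DecidableEq A] [Fintype B] [DecidableEq B]
    (G : SimpleGraph A) (G' : SimpleGraph B) (f : B → A) (hbij : Function.Bijective f)
    (hadj : ∀ x y, G'.Adj x y ↔ G.Adj (f x) (f y)) (l : ℝ) :
    phi G l = phi G' l := by
  unfold phi
  rw [← Matrix.det_submatrix_equiv_self (Equiv.ofBijective f hbij)
    (l • (1 : Matrix A A ℝ) - adjM G)]
  congr 1
  have h0 : (l • (1 : Matrix A A ℝ) - adjM G).submatrix (Equiv.ofBijective f hbij)
      (Equiv.ofBijective f hbij) = (l • (1 : Matrix A A ℝ) - adjM G).submatrix f f := rfl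
  rw [h0, charM_submatrix G G' f hbij.injective hadj]

lemma phi_pendant {V : Type*} [Fintype V] [DecidableEq V] (G : SimpleGraph V) (u c : V)
    (hadj : G.Adj u c) (hnbr : ∀ x, G.Adj u x → x = c)
    {W W2 : Type*} [Fintype W] [DecidableEq W] [Fintype W2] [DecidableEq W2]
    (G1 : SimpleGraph W) (f : W → V) (hfinj : Function.Injective f)
    (hfr : ∀ x : V, x ≠ u ↔ ∃ w, f w = x)
    (hf : ∀ x y, G1.Adj x y ↔ G.Adj (f x) (f y))
    (G2 : SimpleGraph W2) (g : W2 → V) (hginj : Function.Injective g)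
    (hgr : ∀ x : V, (x ≠ u ∧ x ≠ c) ↔ ∃ w, g w = x)
    (hg : ∀ x y, G2.Adj x y ↔ G.Adj (g x) (g y)) (l : ℝ) :
    phi G l = l * phi G1 l - phi G2 l := by
  have huc : u ≠ c := hadj.ne
  have hdet := det_pendant (l • (1 : Matrix V V ℝ) - adjM G) l u c huc
    (by rw [charM_apply]; simp [SimpleGraph.irrefl])
    (by rw [charM_apply]; simp [huc, hadj])
    (by rw [charM_apply]; simp [huc.symm, hadj.symm])
    (by intro x hxu hxc
        rw [charM_apply]
        have : ¬ G.Adj u x := fun h => hxc (hnbr x h)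
        simp [Ne.symm hxu, this])
    (by intro x hxu hxc
        rw [charM_apply]
        have : ¬ G.Adj x u := fun h => hxc (hnbr x h.symm)
        simp [hxu, this])
  have h1 : ((l • (1 : Matrix V V ℝ) - adjM G).submatrix
      (Subtype.val : {x : V // x ≠ u} → V) Subtype.val).det = phi G1 l := by
    rw [det_submatrix_range _ (fun x : V => x ≠ u) f hfinj hfr,
      charM_submatrix G G1 f hfinj hf]
    unfold phi
    rfl
  have h2 : ((l • (1 : Matrix V V ℝ) - adjM G).submatrix
      (Subtype.val : {x : V // x ≠ u ∧ x ≠ c} → V) Subtype.val).det = phi G2 l := by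
    rw [det_submatrix_range _ (fun x : V => x ≠ u ∧ x ≠ c) g hginj hgr,
      charM_submatrix G G2 g hginj hg]
    unfold phi
    rfl
  show (l • (1 : Matrix V V ℝ) - adjM G).det = _
  rw [hdet, h1, h2]

end GraphLemmas

section GraphDefs

/-- Disjoint union of two simple graphs. -/
def sumGraph {A B : Type*} (G1 : SimpleGraph A) (G2 : SimpleGraph B) : SimpleGraph (A ⊕ B) :=
  SimpleGraph.fromRel (fun a b =>
    match a, b with
    | Sum.inl a, Sum.inl b => G1.Adj a b
    | Sum.inr a, Sum.inr b => G2.Adj a b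
    | _, _ => False)

/-- Graph `H` with a pendant path of `k` new vertices attached at `v`. -/
def attachPath {V : Type*} (H : SimpleGraph V) (v : V) (k : ℕ) : SimpleGraph (V ⊕ Fin k) :=
  SimpleGraph.fromRel (fun a b =>
    match a, b with
    | Sum.inl a, Sum.inl b => H.Adj a b
    | Sum.inl a, Sum.inr w => a = v ∧ (w : ℕ) = 0
    | Sum.inr w, Sum.inr w' => (w : ℕ) + 1 = (w' : ℕ)
    | _, _ => False)

/-- `H1` and `H2` joined by a path with `s+1` internal vertices. -/
def bridgeJoin {V1 V2 : Type*} (H1 : SimpleGraph V1) (v1 : V1) (H2 : SimpleGraph V2) (v2 : V2)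
    (s : ℕ) : SimpleGraph (V1 ⊕ V2 ⊕ Fin (s + 1)) :=
  SimpleGraph.fromRel (fun a b =>
    match a, b with
    | Sum.inl a, Sum.inl b => H1.Adj a b
    | Sum.inr (Sum.inl a), Sum.inr (Sum.inl b) => H2.Adj a b
    | Sum.inl a, Sum.inr (Sum.inr w) => a = v1 ∧ (w : ℕ) = 0
    | Sum.inr (Sum.inl a), Sum.inr (Sum.inr w) => a = v2 ∧ (w : ℕ) = s
    | Sum.inr (Sum.inr w), Sum.inr (Sum.inr w') => (w : ℕ) + 1 = (w' : ℕ)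
    | _, _ => False)

lemma sumGraph_adj_inl {A B : Type*} (G1 : SimpleGraph A) (G2 : SimpleGraph B) (a b : A) :
    (sumGraph G1 G2).Adj (Sum.inl a) (Sum.inl b) ↔ G1.Adj a b := by
  rw [sumGraph, SimpleGraph.fromRel_adj]
  constructor
  · rintro ⟨h, h1 | h1⟩
    · exact h1
    · exact h1.symm
  · intro h
    exact ⟨by simpa using h.ne, Or.inl h⟩

lemma sumGraph_adj_inr {A B : Type*} (G1 : SimpleGraph A) (G2 : SimpleGraph B) (a b : B) :
    (sumGraph G1 G2).Adj (Sum.inr a) (Sum.inr b) ↔ G2.Adj a b := by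
  rw [sumGraph, SimpleGraph.fromRel_adj]
  constructor
  · rintro ⟨h, h1 | h1⟩
    · exact h1
    · exact h1.symm
  · intro h
    exact ⟨by simpa using h.ne, Or.inl h⟩

lemma sumGraph_adj_inl_inr {A B : Type*} (G1 : SimpleGraph A) (G2 : SimpleGraph B) (a : A)
    (b : B) : ¬ (sumGraph G1 G2).Adj (Sum.inl a) (Sum.inr b) := by
  rw [sumGraph, SimpleGraph.fromRel_adj]
  rintro ⟨-, h | h⟩ <;> exact h

lemma sumGraph_adj_inr_inl {A B : Type*} (G1 : SimpleGraph A) (G2 : SimpleGraph B) (a : B)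
    (b : A) : ¬ (sumGraph G1 G2).Adj (Sum.inr a) (Sum.inl b) := by
  rw [sumGraph, SimpleGraph.fromRel_adj]
  rintro ⟨-, h | h⟩ <;> exact h

lemma phi_sumGraph {A B : Type*} [Fintype A] [DecidableEq A] [Fintype B] [DecidableEq B]
    (G1 : SimpleGraph A) (G2 : SimpleGraph B) (l : ℝ) :
    phi (sumGraph G1 G2) l = phi G1 l * phi G2 l := by
  unfold phi
  have heq : l • (1 : Matrix (A ⊕ B) (A ⊕ B) ℝ) - adjM (sumGraph G1 G2)
      = Matrix.fromBlocks (l • (1 : Matrix A A ℝ) - adjM G1) 0 0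
          (l • (1 : Matrix B B ℝ) - adjM G2) := by
    ext x y
    rcases x with a | a <;> rcases y with b | b
    · simp only [Matrix.fromBlocks_apply₁₁, charM_apply]
      simp [sumGraph_adj_inl]
    · simp only [Matrix.fromBlocks_apply₁₂, Matrix.zero_apply, charM_apply]
      simp [sumGraph_adj_inl_inr G1 G2 a b]
    · simp only [Matrix.fromBlocks_apply₂₁, Matrix.zero_apply, charM_apply]
      simp [sumGraph_adj_inr_inl G1 G2 a b]
    · simp only [Matrix.fromBlocks_apply₂₂, charM_apply]
      simp [sumGraph_adj_inr]
  rw [heq, Matrix.det_fromBlocks_zero₂₁]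

end GraphDefs

section XFacts

lemma sq_sub_pos {l : ℝ} (hl : 2 < l) : 0 < l ^ 2 - 4 := by nlinarith

lemma x_sum (l : ℝ) : x1 l + x2 l = l := by unfold x1 x2; ring

lemma x_diff (l : ℝ) : x2 l - x1 l = Real.sqrt (l ^ 2 - 4) := by unfold x1 x2; ring

lemma x_diff_pos {l : ℝ} (hl : 2 < l) : 0 < x2 l - x1 l := by
  rw [x_diff]; exact Real.sqrt_pos.mpr (sq_sub_pos hl)

lemma x_mul {l : ℝ} (hl : 2 < l) : x1 l * x2 l = 1 := by
  have hs : Real.sqrt (l ^ 2 - 4) ^ 2 = l ^ 2 - 4 := Real.sq_sqrt (sq_sub_pos hl).le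
  unfold x1 x2
  nlinarith [hs]

lemma x1_sq {l : ℝ} (hl : 2 < l) : x1 l ^ 2 = l * x1 l - 1 := by
  linear_combination x1 l * x_sum l - x_mul hl

lemma x2_sq {l : ℝ} (hl : 2 < l) : x2 l ^ 2 = l * x2 l - 1 := by
  linear_combination x2 l * x_sum l - x_mul hl

lemma x2_pos {l : ℝ} (hl : 2 < l) : 0 < x2 l := by
  unfold x2
  have := Real.sqrt_nonneg (l ^ 2 - 4)
  linarith

lemma x1_ne {l : ℝ} (hl : 2 < l) : x1 l ≠ 0 :=
  left_ne_zero_of_mul_eq_one (x_mul hl)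

lemma x2_ne {l : ℝ} (hl : 2 < l) : x2 l ≠ 0 :=
  right_ne_zero_of_mul_eq_one (x_mul hl)

lemma pq_add {V : Type*} [Fintype V] [DecidableEq V] (G : SimpleGraph V) (v : V) {l : ℝ}
    (hl : 2 < l) : pfun G v l + qfun G v l = phi G l := by
  have hD := (x_diff_pos hl).ne'
  unfold pfun qfun
  field_simp
  ring

lemma pq_one {V : Type*} [Fintype V] [DecidableEq V] (G : SimpleGraph V) (v : V) {l : ℝ}
    (hl : 2 < l) :
    x1 l * pfun G v l + x2 l * qfun G v l = l * phi G l - phi (delVert G v) l := by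
  have hD := (x_diff_pos hl).ne'
  have hs := x_sum l
  unfold pfun qfun
  field_simp
  linear_combination (phi G l * (x2 l - x1 l)) * hs

end XFacts

section AttachPath

variable {V : Type*} (H : SimpleGraph V) (v : V) (k : ℕ)

lemma attachPath_adj_inl (x y : V) :
    (attachPath H v k).Adj (Sum.inl x) (Sum.inl y) ↔ H.Adj x y := by
  rw [attachPath, SimpleGraph.fromRel_adj]
  constructor
  · rintro ⟨-, h | h⟩
    · exact h
    · exact h.symm
  · intro h
    exact ⟨by simpa using h.ne, Or.inl h⟩

lemma attachPath_adj_inl_inr (x : V) (w : Fin k) :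
    (attachPath H v k).Adj (Sum.inl x) (Sum.inr w) ↔ (x = v ∧ (w : ℕ) = 0) := by
  rw [attachPath, SimpleGraph.fromRel_adj]
  constructor
  · rintro ⟨-, h | h⟩
    · exact h
    · exact h.elim
  · intro h
    exact ⟨by simp, Or.inl h⟩

lemma attachPath_adj_inr (w w' : Fin k) :
    (attachPath H v k).Adj (Sum.inr w) (Sum.inr w') ↔
      ((w : ℕ) + 1 = (w' : ℕ) ∨ (w' : ℕ) + 1 = (w : ℕ)) := by
  rw [attachPath, SimpleGraph.fromRel_adj]
  constructor
  · rintro ⟨-, h | h⟩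
    · exact Or.inl h
    · exact Or.inr h
  · intro h
    refine ⟨?_, ?_⟩
    · intro he
      have : w = w' := by simpa using he
      subst this
      omega
    · exact h

lemma phi_attachPath_zero {V : Type*} [Fintype V] [DecidableEq V] (H : SimpleGraph V) (v : V)
    (l : ℝ) : phi (attachPath H v 0) l = phi H l := by
  apply phi_eq_of_bij (attachPath H v 0) H Sum.inl
  · constructor
    · exact Sum.inl_injective
    · rintro (a | w)
      · exact ⟨a, rfl⟩
      · exact w.elim0
  · intro x y
    exact (attachPath_adj_inl H v 0 x y).symm

lemma phi_attachPath_one {V : Type*} [Fintype V] [DecidableEq V] (H : SimpleGraph V) (v : V)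
    (l : ℝ) : phi (attachPath H v 1) l = l * phi H l - phi (delVert H v) l := by
  apply phi_pendant (attachPath H v 1) (Sum.inr 0) (Sum.inl v)
    ?_ ?_ H Sum.inl Sum.inl_injective ?_ ?_
    (delVert H v) (fun x => Sum.inl x.1) ?_ ?_ ?_
  · rw [SimpleGraph.adj_comm, attachPath_adj_inl_inr]
    exact ⟨rfl, rfl⟩
  · rintro (a | w) h
    · rw [SimpleGraph.adj_comm, attachPath_adj_inl_inr] at h
      rw [h.1]
    · exact absurd (congrArg Sum.inr (Subsingleton.elim (0 : Fin 1) w)) h.ne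
  · rintro (a | w)
    · constructor
      · intro _; exact ⟨a, rfl⟩
      · intro _; simp
    · constructor
      · intro h
        exact absurd (congrArg Sum.inr (Subsingleton.elim (w : Fin 1) 0)) h
      · rintro ⟨w', hw⟩
        exact absurd hw (by simp)
  · intro x y
    exact (attachPath_adj_inl H v 1 x y).symm
  · intro a b hab
    exact Subtype.ext (by simpa using hab)
  · rintro (a | w)
    · constructor
      · rintro ⟨-, ha⟩
        have : a ≠ v := fun h => ha (by rw [h])
        exact ⟨⟨a, this⟩, rfl⟩
      · rintro ⟨w', hw⟩
        have ha : (w' : V) = a := by simpa using hw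
        refine ⟨by simp, fun h => w'.2 ?_⟩
        have hav : a = v := by simpa using h
        exact ha.trans hav
    · constructor
      · rintro ⟨h, -⟩
        exact absurd (congrArg Sum.inr (Subsingleton.elim (w : Fin 1) 0)) h
      · rintro ⟨w', hw⟩
        exact absurd hw (by simp)
  · intro x y
    show H.Adj x.1 y.1 ↔ _
    exact (attachPath_adj_inl H v 1 x.1 y.1).symm

lemma phi_attachPath_succ {V : Type*} [Fintype V] [DecidableEq V] (H : SimpleGraph V) (v : V)
    (k : ℕ) (l : ℝ) :
    phi (attachPath H v (k + 2)) l
      = l * phi (attachPath H v (k + 1)) l - phi (attachPath H v k) l := by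
  apply phi_pendant (attachPath H v (k + 2)) (Sum.inr ⟨k + 1, by omega⟩) (Sum.inr ⟨k, by omega⟩)
    ?_ ?_ (attachPath H v (k + 1)) (Sum.map id Fin.castSucc) ?_ ?_ ?_
    (attachPath H v k) (Sum.map id (Fin.castLE (by omega))) ?_ ?_ ?_
  · rw [attachPath_adj_inr]
    right; rfl
  · rintro (a | w) h
    · rw [SimpleGraph.adj_comm, attachPath_adj_inl_inr] at h
      simp at h
    · rw [attachPath_adj_inr] at h
      simp only [] at h
      have : (w : ℕ) = k := by omega
      exact congrArg Sum.inr (Fin.ext this)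
  · intro a b hab
    rcases a with a | a <;> rcases b with b | b <;> simp_all [Fin.ext_iff]
  · rintro (a | w)
    · constructor
      · intro _; exact ⟨Sum.inl a, rfl⟩
      · intro _; simp
    · constructor
      · intro h
        have hw : (w : ℕ) ≠ k + 1 := fun hc => h (congrArg Sum.inr (Fin.ext hc))
        refine ⟨Sum.inr ⟨(w : ℕ), by omega⟩, ?_⟩
        simp [Fin.ext_iff]
      · rintro ⟨(a | w'), hw⟩
        · exact absurd hw (by simp)
        · intro hc
          rw [← hw] at hc
          simp [Fin.ext_iff] at hc
          omega
  · intro x y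
    rcases x with a | w <;> rcases y with b | w'
    · rw [attachPath_adj_inl, Sum.map_inl, Sum.map_inl, attachPath_adj_inl]
      simp
    · rw [attachPath_adj_inl_inr, Sum.map_inl, Sum.map_inr, attachPath_adj_inl_inr]
      simp
    · rw [SimpleGraph.adj_comm, attachPath_adj_inl_inr, Sum.map_inl, Sum.map_inr,
        SimpleGraph.adj_comm, attachPath_adj_inl_inr]
      simp
    · rw [attachPath_adj_inr, Sum.map_inr, Sum.map_inr, attachPath_adj_inr]
      simp
  · intro a b hab
    rcases a with a | a <;> rcases b with b | b <;> simp_all [Fin.ext_iff]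
  · rintro (a | w)
    · constructor
      · intro _; exact ⟨Sum.inl a, rfl⟩
      · intro _
        constructor <;> simp
    · constructor
      · rintro ⟨h1, h2⟩
        have hw1 : (w : ℕ) ≠ k + 1 := fun hc => h1 (congrArg Sum.inr (Fin.ext hc))
        have hw2 : (w : ℕ) ≠ k := fun hc => h2 (congrArg Sum.inr (Fin.ext hc))
        refine ⟨Sum.inr ⟨(w : ℕ), by omega⟩, ?_⟩
        simp [Fin.ext_iff]
      · rintro ⟨(a | w'), hw⟩
        · exact absurd hw (by simp)
        · constructor <;>
          · intro hc
            rw [← hw] at hc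
            simp [Fin.ext_iff] at hc
            omega
  · intro x y
    rcases x with a | w <;> rcases y with b | w'
    · rw [attachPath_adj_inl, Sum.map_inl, Sum.map_inl, attachPath_adj_inl]
      simp
    · rw [attachPath_adj_inl_inr, Sum.map_inl, Sum.map_inr, attachPath_adj_inl_inr]
      simp
    · rw [SimpleGraph.adj_comm, attachPath_adj_inl_inr, Sum.map_inl, Sum.map_inr,
        SimpleGraph.adj_comm, attachPath_adj_inl_inr]
      simp
    · rw [attachPath_adj_inr, Sum.map_inr, Sum.map_inr, attachPath_adj_inr]
      simp

lemma phi_attachPath {V : Type*} [Fintype V] [DecidableEq V] (H : SimpleGraph V) (v : V)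
    {l : ℝ} (hl : 2 < l) (k : ℕ) :
    phi (attachPath H v k) l = pfun H v l * x1 l ^ k + qfun H v l * x2 l ^ k := by
  induction k using Nat.twoStepInduction with
  | zero =>
    rw [phi_attachPath_zero, pow_zero, pow_zero, mul_one, mul_one]
    exact (pq_add H v hl).symm
  | one =>
    rw [phi_attachPath_one, pow_one, pow_one, ← pq_one H v hl]
    ring
  | more k ih1 ih2 =>
    rw [phi_attachPath_succ, ih1, ih2]
    linear_combination (-(pfun H v l * x1 l ^ k)) * x1_sq hl - qfun H v l * x2 l ^ k * x2_sq hl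

end AttachPath

section PathJoin

variable {V1 V2 : Type*} (H1 : SimpleGraph V1) (v1 : V1) (H2 : SimpleGraph V2) (v2 : V2)

lemma bridgeJoin_adj_11 (s : ℕ) (a b : V1) :
    (bridgeJoin H1 v1 H2 v2 s).Adj (Sum.inl a) (Sum.inl b) ↔ H1.Adj a b := by
  rw [bridgeJoin, SimpleGraph.fromRel_adj]
  constructor
  · rintro ⟨-, h | h⟩
    · exact h
    · exact h.symm
  · intro h
    exact ⟨by simpa using h.ne, Or.inl h⟩

lemma bridgeJoin_adj_22 (s : ℕ) (a b : V2) :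
    (bridgeJoin H1 v1 H2 v2 s).Adj (Sum.inr (Sum.inl a)) (Sum.inr (Sum.inl b)) ↔ H2.Adj a b := by
  rw [bridgeJoin, SimpleGraph.fromRel_adj]
  constructor
  · rintro ⟨-, h | h⟩
    · exact h
    · exact h.symm
  · intro h
    exact ⟨by simpa using h.ne, Or.inl h⟩

lemma bridgeJoin_adj_1w (s : ℕ) (a : V1) (w : Fin (s + 1)) :
    (bridgeJoin H1 v1 H2 v2 s).Adj (Sum.inl a) (Sum.inr (Sum.inr w)) ↔
      (a = v1 ∧ (w : ℕ) = 0) := by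
  rw [bridgeJoin, SimpleGraph.fromRel_adj]
  constructor
  · rintro ⟨-, h | h⟩
    · exact h
    · exact h.elim
  · intro h
    exact ⟨by simp, Or.inl h⟩

lemma bridgeJoin_adj_2w (s : ℕ) (b : V2) (w : Fin (s + 1)) :
    (bridgeJoin H1 v1 H2 v2 s).Adj (Sum.inr (Sum.inl b)) (Sum.inr (Sum.inr w)) ↔
      (b = v2 ∧ (w : ℕ) = s) := by
  rw [bridgeJoin, SimpleGraph.fromRel_adj]
  constructor
  · rintro ⟨-, h | h⟩
    · exact h
    · exact h.elim
  · intro h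
    exact ⟨by simp, Or.inl h⟩

lemma bridgeJoin_adj_ww (s : ℕ) (w w' : Fin (s + 1)) :
    (bridgeJoin H1 v1 H2 v2 s).Adj (Sum.inr (Sum.inr w)) (Sum.inr (Sum.inr w')) ↔
      ((w : ℕ) + 1 = (w' : ℕ) ∨ (w' : ℕ) + 1 = (w : ℕ)) := by
  rw [bridgeJoin, SimpleGraph.fromRel_adj]
  constructor
  · rintro ⟨-, h | h⟩
    · exact Or.inl h
    · exact Or.inr h
  · intro h
    refine ⟨fun he => ?_, h⟩
    have : w = w' := by simpa using he
    subst this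
    omega

lemma bridgeJoin_not_adj_12 (s : ℕ) (a : V1) (b : V2) :
    ¬ (bridgeJoin H1 v1 H2 v2 s).Adj (Sum.inl a) (Sum.inr (Sum.inl b)) := by
  rw [bridgeJoin, SimpleGraph.fromRel_adj]
  rintro ⟨-, h | h⟩ <;> exact h

lemma pathJoin_adj_11 (i j : ℕ) (a b : V1) :
    (pathJoin H1 v1 H2 v2 i j).Adj (Sum.inl a) (Sum.inl b) ↔ H1.Adj a b := by
  rw [pathJoin, SimpleGraph.fromRel_adj]
  constructor
  · rintro ⟨-, h | h⟩
    · exact h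
    · exact h.symm
  · intro h
    exact ⟨by simpa using h.ne, Or.inl h⟩

lemma pathJoin_adj_22 (i j : ℕ) (a b : V2) :
    (pathJoin H1 v1 H2 v2 i j).Adj (Sum.inr (Sum.inl a)) (Sum.inr (Sum.inl b)) ↔ H2.Adj a b := by
  rw [pathJoin, SimpleGraph.fromRel_adj]
  constructor
  · rintro ⟨-, h | h⟩
    · exact h
    · exact h.symm
  · intro h
    exact ⟨by simpa using h.ne, Or.inl h⟩

lemma pathJoin_adj_1w (i j : ℕ) (a : V1) (w : Fin (i + j + 1)) :
    (pathJoin H1 v1 H2 v2 i j).Adj (Sum.inl a) (Sum.inr (Sum.inr (Sum.inl w))) ↔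
      (a = v1 ∧ (w : ℕ) = 0) := by
  rw [pathJoin, SimpleGraph.fromRel_adj]
  constructor
  · rintro ⟨-, h | h⟩
    · exact h
    · exact h.elim
  · intro h
    exact ⟨by simp, Or.inl h⟩

lemma pathJoin_adj_2w (i j : ℕ) (b : V2) (w : Fin (i + j + 1)) :
    (pathJoin H1 v1 H2 v2 i j).Adj (Sum.inr (Sum.inl b)) (Sum.inr (Sum.inr (Sum.inl w))) ↔
      (b = v2 ∧ (w : ℕ) = i + j) := by
  rw [pathJoin, SimpleGraph.fromRel_adj]
  constructor
  · rintro ⟨-, h | h⟩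
    · exact h
    · exact h.elim
  · intro h
    exact ⟨by simp, Or.inl h⟩

lemma pathJoin_adj_ww (i j : ℕ) (w w' : Fin (i + j + 1)) :
    (pathJoin H1 v1 H2 v2 i j).Adj (Sum.inr (Sum.inr (Sum.inl w)))
      (Sum.inr (Sum.inr (Sum.inl w'))) ↔
      ((w : ℕ) + 1 = (w' : ℕ) ∨ (w' : ℕ) + 1 = (w : ℕ)) := by
  rw [pathJoin, SimpleGraph.fromRel_adj]
  constructor
  · rintro ⟨-, h | h⟩
    · exact Or.inl h
    · exact Or.inr h
  · intro h
    refine ⟨fun he => ?_, h⟩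
    have : w = w' := by simpa using he
    subst this
    omega

lemma pathJoin_adj_wu (i j : ℕ) (w : Fin (i + j + 1)) (t : Unit) :
    (pathJoin H1 v1 H2 v2 i j).Adj (Sum.inr (Sum.inr (Sum.inl w)))
      (Sum.inr (Sum.inr (Sum.inr t))) ↔ (w : ℕ) = i := by
  rw [pathJoin, SimpleGraph.fromRel_adj]
  constructor
  · rintro ⟨-, h | h⟩
    · exact h
    · exact h.elim
  · intro h
    exact ⟨by simp, Or.inl h⟩

lemma pathJoin_not_adj_12 (i j : ℕ) (a : V1) (b : V2) :
    ¬ (pathJoin H1 v1 H2 v2 i j).Adj (Sum.inl a) (Sum.inr (Sum.inl b)) := by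
  rw [pathJoin, SimpleGraph.fromRel_adj]
  rintro ⟨-, h | h⟩ <;> exact h

lemma pathJoin_not_adj_1u (i j : ℕ) (a : V1) (t : Unit) :
    ¬ (pathJoin H1 v1 H2 v2 i j).Adj (Sum.inl a) (Sum.inr (Sum.inr (Sum.inr t))) := by
  rw [pathJoin, SimpleGraph.fromRel_adj]
  rintro ⟨-, h | h⟩ <;> exact h

lemma pathJoin_not_adj_2u (i j : ℕ) (b : V2) (t : Unit) :
    ¬ (pathJoin H1 v1 H2 v2 i j).Adj (Sum.inr (Sum.inl b)) (Sum.inr (Sum.inr (Sum.inr t))) := by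
  rw [pathJoin, SimpleGraph.fromRel_adj]
  rintro ⟨-, h | h⟩ <;> exact h

/-- The embedding of the two pendant-path graphs into the vertex set of `pathJoin`. -/
def joinMap {V1 V2 : Type*} (i j : ℕ) :
    (V1 ⊕ Fin i) ⊕ (V2 ⊕ Fin j) → (V1 ⊕ V2 ⊕ Fin (i + j + 1) ⊕ Unit)
  | Sum.inl (Sum.inl a) => Sum.inl a
  | Sum.inl (Sum.inr w) => Sum.inr (Sum.inr (Sum.inl ⟨(w : ℕ), by omega⟩))
  | Sum.inr (Sum.inl b) => Sum.inr (Sum.inl b)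
  | Sum.inr (Sum.inr w) => Sum.inr (Sum.inr (Sum.inl ⟨i + j - (w : ℕ), by omega⟩))

@[simp] lemma joinMap_ll {V1 V2 : Type*} (i j : ℕ) (a : V1) :
    (joinMap i j (Sum.inl (Sum.inl a)) : V1 ⊕ V2 ⊕ Fin (i + j + 1) ⊕ Unit) = Sum.inl a := rfl
@[simp] lemma joinMap_lr {V1 V2 : Type*} (i j : ℕ) (w : Fin i) :
    (joinMap i j (Sum.inl (Sum.inr w)) : V1 ⊕ V2 ⊕ Fin (i + j + 1) ⊕ Unit)
      = Sum.inr (Sum.inr (Sum.inl ⟨(w : ℕ), by omega⟩)) := rfl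
@[simp] lemma joinMap_rl {V1 V2 : Type*} (i j : ℕ) (b : V2) :
    (joinMap i j (Sum.inr (Sum.inl b)) : V1 ⊕ V2 ⊕ Fin (i + j + 1) ⊕ Unit)
      = Sum.inr (Sum.inl b) := rfl
@[simp] lemma joinMap_rr {V1 V2 : Type*} (i j : ℕ) (w : Fin j) :
    (joinMap i j (Sum.inr (Sum.inr w)) : V1 ⊕ V2 ⊕ Fin (i + j + 1) ⊕ Unit)
      = Sum.inr (Sum.inr (Sum.inl ⟨i + j - (w : ℕ), by omega⟩)) := rfl

lemma phi_pathJoin_expand {V1 V2 : Type*}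
    [Fintype V1] [DecidableEq V1] [Fintype V2] [DecidableEq V2]
    (H1 : SimpleGraph V1) (v1 : V1) (H2 : SimpleGraph V2) (v2 : V2) (i j : ℕ) (l : ℝ) :
    phi (pathJoin H1 v1 H2 v2 i j) l
      = l * phi (bridgeJoin H1 v1 H2 v2 (i + j)) l
        - phi (sumGraph (attachPath H1 v1 i) (attachPath H2 v2 j)) l := by
  apply phi_pendant (pathJoin H1 v1 H2 v2 i j)
    (Sum.inr (Sum.inr (Sum.inr ()))) (Sum.inr (Sum.inr (Sum.inl ⟨i, by omega⟩)))
    ?_ ?_ (bridgeJoin H1 v1 H2 v2 (i + j)) (Sum.map id (Sum.map id Sum.inl)) ?_ ?_ ?_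
    (sumGraph (attachPath H1 v1 i) (attachPath H2 v2 j)) (joinMap i j) ?_ ?_ ?_
  · rw [SimpleGraph.adj_comm, pathJoin_adj_wu]
  · rintro (a | b | w | t) h
    · rw [SimpleGraph.adj_comm] at h
      exact absurd h (pathJoin_not_adj_1u H1 v1 H2 v2 i j a ())
    · rw [SimpleGraph.adj_comm] at h
      exact absurd h (pathJoin_not_adj_2u H1 v1 H2 v2 i j b ())
    · rw [SimpleGraph.adj_comm, pathJoin_adj_wu] at h
      exact congrArg (fun z => Sum.inr (Sum.inr (Sum.inl z))) (Fin.ext h)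
    · exact absurd rfl h.ne
  · exact Function.injective_id.sumMap (Function.injective_id.sumMap Sum.inl_injective)
  · rintro (a | b | w | t)
    · exact ⟨fun _ => ⟨Sum.inl a, rfl⟩, fun _ => by simp⟩
    · exact ⟨fun _ => ⟨Sum.inr (Sum.inl b), rfl⟩, fun _ => by simp⟩
    · exact ⟨fun _ => ⟨Sum.inr (Sum.inr w), rfl⟩, fun _ => by simp⟩
    · refine ⟨fun h => absurd rfl h, ?_⟩
      rintro ⟨(a | b | w), hw⟩ <;> exact absurd hw (by simp)
  · rintro (a | b | w) (a' | b' | w') <;>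
      simp only [Sum.map_inl, Sum.map_inr, id_eq]
    · rw [bridgeJoin_adj_11, pathJoin_adj_11]
    · constructor
      · intro h; exact absurd h (bridgeJoin_not_adj_12 H1 v1 H2 v2 (i + j) a b')
      · intro h; exact absurd h (pathJoin_not_adj_12 H1 v1 H2 v2 i j a b')
    · rw [bridgeJoin_adj_1w, pathJoin_adj_1w]
    · constructor
      · intro h
        exact absurd h.symm (bridgeJoin_not_adj_12 H1 v1 H2 v2 (i + j) a' b)
      · intro h
        exact absurd h.symm (pathJoin_not_adj_12 H1 v1 H2 v2 i j a' b)
    · rw [bridgeJoin_adj_22, pathJoin_adj_22]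
    · rw [bridgeJoin_adj_2w, pathJoin_adj_2w]
    · rw [SimpleGraph.adj_comm, bridgeJoin_adj_1w, SimpleGraph.adj_comm, pathJoin_adj_1w]
    · rw [SimpleGraph.adj_comm, bridgeJoin_adj_2w, SimpleGraph.adj_comm, pathJoin_adj_2w]
    · rw [bridgeJoin_adj_ww, pathJoin_adj_ww]
  · rintro ((a | w) | (b | u)) ((a' | w') | (b' | u')) h <;>
      simp only [joinMap_ll, joinMap_lr, joinMap_rl, joinMap_rr, Sum.inl.injEq, Sum.inr.injEq,
        Fin.mk.injEq, reduceCtorEq] at h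
    · rw [h]
    · rw [show w = w' from Fin.ext (by exact h)]
    · exact absurd h (by have := w.isLt; have := u'.isLt; omega)
    · rw [h]
    · exact absurd h (by have := u.isLt; have := w'.isLt; omega)
    · rw [show u = u' from Fin.ext (by have := u.isLt; have := u'.isLt; omega)]
  · rintro (a | b | w | t)
    · refine ⟨fun _ => ⟨Sum.inl (Sum.inl a), rfl⟩, fun _ => ⟨by simp, by simp⟩⟩
    · refine ⟨fun _ => ⟨Sum.inr (Sum.inl b), rfl⟩, fun _ => ⟨by simp, by simp⟩⟩
    · constructor
      · rintro ⟨-, hc⟩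
        have hwi : (w : ℕ) ≠ i := by
          intro hh
          exact hc (congrArg (fun z => Sum.inr (Sum.inr (Sum.inl z))) (Fin.ext hh))
        rcases lt_or_gt_of_ne hwi with hlt | hgt
        · exact ⟨Sum.inl (Sum.inr ⟨(w : ℕ), hlt⟩), by rw [joinMap_lr]⟩
        · have hw := w.isLt
          refine ⟨Sum.inr (Sum.inr ⟨i + j - (w : ℕ), by omega⟩), ?_⟩
          rw [joinMap_rr]
          refine congrArg (fun z => Sum.inr (Sum.inr (Sum.inl z))) (Fin.ext ?_)
          show i + j - (i + j - (w : ℕ)) = (w : ℕ)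
          omega
      · rintro ⟨(x | x), hw⟩
        · rcases x with x | x
          · exact absurd hw (by simp)
          · refine ⟨by simp, fun hc => ?_⟩
            rw [← hw, joinMap_lr] at hc
            have hx := x.isLt
            have hc' : (x : ℕ) = i := by
              have := congrArg (fun z => match z with
                | Sum.inr (Sum.inr (Sum.inl (w : Fin (i + j + 1)))) => (w : ℕ)
                | _ => 0) hc
              simpa using this
            omega
        · rcases x with x | x
          · exact absurd hw (by simp)
          · refine ⟨by simp, fun hc => ?_⟩
            rw [← hw, joinMap_rr] at hc
            have hx := x.isLt
            have hc' : i + j - (x : ℕ) = i := by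
              have := congrArg (fun z => match z with
                | Sum.inr (Sum.inr (Sum.inl (w : Fin (i + j + 1)))) => (w : ℕ)
                | _ => 0) hc
              simpa using this
            omega
    · refine ⟨fun h => absurd rfl h.1, ?_⟩
      rintro ⟨(x | x), hw⟩ <;> rcases x with x | x <;> exact absurd hw (by simp)
  · rintro ((a | w) | (b | w)) ((a' | w') | (b' | w'))
    · rw [sumGraph_adj_inl, attachPath_adj_inl, joinMap_ll, joinMap_ll, pathJoin_adj_11]
    · rw [sumGraph_adj_inl, attachPath_adj_inl_inr, joinMap_ll, joinMap_lr, pathJoin_adj_1w]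
    · constructor
      · intro h; exact absurd h (sumGraph_adj_inl_inr _ _ _ _)
      · rw [joinMap_ll, joinMap_rl]
        intro h; exact absurd h (pathJoin_not_adj_12 H1 v1 H2 v2 i j a b')
    · constructor
      · intro h; exact absurd h (sumGraph_adj_inl_inr _ _ _ _)
      · rw [joinMap_ll, joinMap_rr, pathJoin_adj_1w]
        rintro ⟨-, hc⟩
        have := w'.isLt
        have hc' : i + j - (w' : ℕ) = 0 := hc
        omega
    · rw [sumGraph_adj_inl, SimpleGraph.adj_comm, attachPath_adj_inl_inr, joinMap_ll,
        joinMap_lr, SimpleGraph.adj_comm, pathJoin_adj_1w]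
    · rw [sumGraph_adj_inl, attachPath_adj_inr, joinMap_lr, joinMap_lr, pathJoin_adj_ww]
    · constructor
      · intro h; exact absurd h (sumGraph_adj_inl_inr _ _ _ _)
      · rw [joinMap_lr, joinMap_rl, SimpleGraph.adj_comm, pathJoin_adj_2w]
        rintro ⟨-, hc⟩
        have := w.isLt
        have hc' : (w : ℕ) = i + j := hc
        omega
    · constructor
      · intro h; exact absurd h (sumGraph_adj_inl_inr _ _ _ _)
      · rw [joinMap_lr, joinMap_rr, pathJoin_adj_ww]
        have h1 := w.isLt
        have h2 := w'.isLt
        show ((w : ℕ) + 1 = i + j - (w' : ℕ) ∨ i + j - (w' : ℕ) + 1 = (w : ℕ)) → _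
        omega
    · constructor
      · intro h; exact absurd h (sumGraph_adj_inr_inl _ _ _ _)
      · rw [joinMap_rl, joinMap_ll]
        intro h; exact absurd h.symm (pathJoin_not_adj_12 H1 v1 H2 v2 i j a' b)
    · constructor
      · intro h; exact absurd h (sumGraph_adj_inr_inl _ _ _ _)
      · rw [joinMap_rl, joinMap_lr, pathJoin_adj_2w]
        rintro ⟨-, hc⟩
        have := w'.isLt
        have hc' : (w' : ℕ) = i + j := hc
        omega
    · rw [sumGraph_adj_inr, attachPath_adj_inl, joinMap_rl, joinMap_rl, pathJoin_adj_22]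
    · rw [sumGraph_adj_inr, attachPath_adj_inl_inr, joinMap_rl, joinMap_rr, pathJoin_adj_2w]
      have := w'.isLt
      refine and_congr_right fun _ => ?_
      show (w' : ℕ) = 0 ↔ i + j - (w' : ℕ) = i + j
      omega
    · constructor
      · intro h; exact absurd h (sumGraph_adj_inr_inl _ _ _ _)
      · rw [joinMap_rr, joinMap_ll, SimpleGraph.adj_comm, pathJoin_adj_1w]
        rintro ⟨-, hc⟩
        have := w.isLt
        have hc' : i + j - (w : ℕ) = 0 := hc
        omega
    · constructor
      · intro h; exact absurd h (sumGraph_adj_inr_inl _ _ _ _)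
      · rw [joinMap_rr, joinMap_lr, pathJoin_adj_ww]
        have h1 := w.isLt
        have h2 := w'.isLt
        show (i + j - (w : ℕ) + 1 = (w' : ℕ) ∨ (w' : ℕ) + 1 = i + j - (w : ℕ)) → _
        omega
    · rw [sumGraph_adj_inr, SimpleGraph.adj_comm, attachPath_adj_inl_inr, joinMap_rr,
        joinMap_rl, SimpleGraph.adj_comm, pathJoin_adj_2w]
      have := w.isLt
      refine and_congr_right fun _ => ?_
      show (w : ℕ) = 0 ↔ i + j - (w : ℕ) = i + j
      omega
    · rw [sumGraph_adj_inr, attachPath_adj_inr, joinMap_rr, joinMap_rr, pathJoin_adj_ww]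
      have h1 := w.isLt
      have h2 := w'.isLt
      show ((w : ℕ) + 1 = (w' : ℕ) ∨ (w' : ℕ) + 1 = (w : ℕ)) ↔
        (i + j - (w : ℕ) + 1 = i + j - (w' : ℕ) ∨ i + j - (w' : ℕ) + 1 = i + j - (w : ℕ))
      omega

end PathJoin


theorem phi_pathJoin_diff' {V1 V2 : Type*}
    [Fintype V1] [DecidableEq V1] [Fintype V2] [DecidableEq V2]
    (H1 : SimpleGraph V1) (v1 : V1) (H2 : SimpleGraph V2) (v2 : V2)
    (i j : ℕ) (hj : 1 ≤ j) (l : ℝ) (hl : 2 < l) :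
    phi (pathJoin H1 v1 H2 v2 i j) l - phi (pathJoin H1 v1 H2 v2 (i + 1) (j - 1)) l =
      (x1 l - x2 l) *
        (pfun H1 v1 l * qfun H2 v2 l * x2 l ^ ((j : ℤ) - (i : ℤ) - 1) -
         qfun H1 v1 l * pfun H2 v2 l * x1 l ^ ((j : ℤ) - (i : ℤ) - 1)) := by
  obtain ⟨j', rfl⟩ : ∃ j'', j = j'' + 1 := ⟨j - 1, by omega⟩
  show phi (pathJoin H1 v1 H2 v2 i (j' + 1)) l - phi (pathJoin H1 v1 H2 v2 (i + 1) j') l =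
      (x1 l - x2 l) *
        (pfun H1 v1 l * qfun H2 v2 l * x2 l ^ (((j' + 1 : ℕ) : ℤ) - (i : ℤ) - 1) -
         qfun H1 v1 l * pfun H2 v2 l * x1 l ^ (((j' + 1 : ℕ) : ℤ) - (i : ℤ) - 1))
  have e1 := phi_pathJoin_expand H1 v1 H2 v2 i (j' + 1) l
  have e2 := phi_pathJoin_expand H1 v1 H2 v2 (i + 1) j' l
  have hcongr : ∀ s t : ℕ, s = t → phi (bridgeJoin H1 v1 H2 v2 s) l
      = phi (bridgeJoin H1 v1 H2 v2 t) l := by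
    rintro s t rfl; rfl
  have hbr := hcongr (i + 1 + j') (i + (j' + 1)) (by omega)
  rw [e1, e2, hbr, phi_sumGraph, phi_sumGraph,
    phi_attachPath H1 v1 hl, phi_attachPath H2 v2 hl,
    phi_attachPath H1 v1 hl, phi_attachPath H2 v2 hl]
  have hx1 : x1 l ≠ 0 := x1_ne hl
  have hx2 : x2 l ≠ 0 := x2_ne hl
  have hinv2 : (x2 l)⁻¹ = x1 l := inv_eq_of_mul_eq_one_left (x_mul hl)
  have hinv1 : (x1 l)⁻¹ = x2 l := inv_eq_of_mul_eq_one_right (x_mul hl)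
  have hE : ((j' + 1 : ℕ) : ℤ) - (i : ℤ) - 1 = (j' : ℤ) - (i : ℤ) := by push_cast; ring
  rw [hE]
  have h2E : x2 l ^ ((j' : ℤ) - (i : ℤ)) = x2 l ^ (j' : ℕ) * x1 l ^ (i : ℕ) := by
    rw [zpow_sub₀ hx2, zpow_natCast, zpow_natCast, div_eq_mul_inv, ← inv_pow, hinv2]
  have h1E : x1 l ^ ((j' : ℤ) - (i : ℤ)) = x1 l ^ (j' : ℕ) * x2 l ^ (i : ℕ) := by
    rw [zpow_sub₀ hx1, zpow_natCast, zpow_natCast, div_eq_mul_inv, ← inv_pow, hinv1]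
  rw [h2E, h1E]
  ring

/-- Lemma 2.8: the difference of characteristic polynomials of `G_{i,j}` and `G_{i+1,j-1}`. -/
theorem phi_pathJoin_diff {V1 V2 : Type*}
    [Fintype V1] [DecidableEq V1] [Fintype V2] [DecidableEq V2]
    (H1 : SimpleGraph V1) (v1 : V1) (H2 : SimpleGraph V2) (v2 : V2)
    (i j : ℕ) (hj : 1 ≤ j) (l : ℝ) (hl : 2 < l) :
    phi (pathJoin H1 v1 H2 v2 i j) l - phi (pathJoin H1 v1 H2 v2 (i + 1) (j - 1)) l =
      (x1 l - x2 l) *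
        (pfun H1 v1 l * qfun H2 v2 l * x2 l ^ ((j : ℤ) - (i : ℤ) - 1) -
         qfun H1 v1 l * pfun H2 v2 l * x1 l ^ ((j : ℤ) - (i : ℤ) - 1)) := by
  exact phi_pathJoin_diff' H1 v1 H2 v2 i j hj l hl
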